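/- Let G be a Polish group acting topometrically with ample generics on a Polish topometric space X. Let A, B ⊆ X with A non-meagre and B non-meagre in every non-empty open set, let x̄ ∈ X^n be generic, V an open neighbourhood of 1_G, and ε > 0. Then there exist y₀ ∈ A, y₁ ∈ B and h ∈ V such that (x̄,y₀) and (x̄,y₁) are generic and ∂(h·(x̄,y₀),(x̄,y₁)) < ε. -/

import Mathlib

/-- The supremum metric on tuples induced by a metric `D`. -/
noncomputable def supMet {X : Type*} (D : X → X → ℝ) {n : ℕ} (x y : Fin n → X) : ℝ :=
  ⨆ i : Fin n, D (x i) (y i)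

/-- The orbit of a tuple under the diagonal action associated to `a : G → X → X`. -/
def orbitTup {G X : Type*} (a : G → X → X) {n : ℕ} (x : Fin n → X) : Set (Fin n → X) :=
  {y | ∃ g : G, ∀ i, a g (x i) = y i}

/-- The open `ε`-enlargement of a set of tuples with respect to the sup metric of `D`. -/
def encl {X : Type*} (D : X → X → ℝ) {n : ℕ} (ε : ℝ) (A : Set (Fin n → X)) :
    Set (Fin n → X) :=
  {x | ∃ y ∈ A, supMet D x y < ε}

/-- The closure of a set of tuples in the sup metric of `D`. -/
def metCl {X : Type*} (D : X → X → ℝ) {n : ℕ} (A : Set (Fin n → X)) :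
    Set (Fin n → X) :=
  {x | ∀ ε > (0 : ℝ), ∃ y ∈ A, supMet D x y < ε}

/-- The set of generic `n`-tuples: those whose orbit has comeagre `D`-closure. -/
def generics {G X : Type*} [TopologicalSpace X] (D : X → X → ℝ) (a : G → X → X)
    (n : ℕ) : Set (Fin n → X) :=
  {x | metCl D (orbitTup a x) ∈ residual (Fin n → X)}



open Set Filter Topology TopologicalSpace

section BaireHelpers
variable {α : Type*} [TopologicalSpace α]

lemma myIsMeagre_union {s t : Set α} (hs : IsMeagre s) (ht : IsMeagre t) : IsMeagre (s ∪ t) := by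
  rw [IsMeagre, compl_union]; exact Filter.inter_mem hs ht

lemma myIsMeagre_sUnion {S : Set (Set α)} (hc : S.Countable) (h : ∀ t ∈ S, IsMeagre t) :
    IsMeagre (⋃₀ S) := by
  rw [IsMeagre, compl_sUnion]
  exact (countable_sInter_mem (hc.image _)).mpr (by rintro t ⟨u, hu, rfl⟩; exact h u hu)

lemma myIsMeagre_iUnion {ι : Sort*} [Countable ι] {f : ι → Set α} (h : ∀ i, IsMeagre (f i)) :
    IsMeagre (⋃ i, f i) := by
  rw [IsMeagre, compl_iUnion]
  exact countable_iInter_mem.mpr h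

lemma nonmeagre_nonempty {s : Set α} (h : ¬ IsMeagre s) : s.Nonempty := by
  rcases s.eq_empty_or_nonempty with rfl | hs
  · exact absurd IsMeagre.empty h
  · exact hs

lemma open_not_meagre [BaireSpace α] {U : Set α} (hU : IsOpen U) (hne : U.Nonempty) :
    ¬ IsMeagre U := by
  intro h
  have hd : Dense Uᶜ := dense_of_mem_residual h
  rcases hd.inter_open_nonempty U hU hne with ⟨y, hy1, hy2⟩
  exact hy2 hy1

lemma nonmeagre_inter_residual {s t : Set α} (ht : ¬ IsMeagre t) (hs : s ∈ residual α) :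
    ¬ IsMeagre (t ∩ s) := by
  intro h
  have hsc : IsMeagre sᶜ := by rw [IsMeagre, compl_compl]; exact hs
  refine ht (IsMeagre.mono ?_ (myIsMeagre_union h hsc))
  intro y hy
  by_cases hys : y ∈ s
  · exact Or.inl ⟨hy, hys⟩
  · exact Or.inr hys

lemma nonmeagre_diff_meagre {t m : Set α} (ht : ¬ IsMeagre t) (hm : IsMeagre m) :
    (t \ m).Nonempty := by
  rcases (t \ m).eq_empty_or_nonempty with he | h
  · exfalso
    exact ht (hm.mono (by intro y hy; by_contra hym; exact (eq_empty_iff_forall_notMem.1 he y) ⟨hy, hym⟩))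
  · exact h

/-- Localization: a non-meagre set is non-meagre in every non-empty open subset of
some non-empty open set. -/
lemma exists_open_forall_nonmeagre [SecondCountableTopology α] {s : Set α} (h : ¬ IsMeagre s) :
    ∃ U : Set α, IsOpen U ∧ U.Nonempty ∧
      ∀ O : Set α, IsOpen O → O ⊆ U → O.Nonempty → ¬ IsMeagre (s ∩ O) := by
  by_contra hc
  push_neg at hc
  set T : Set (Set α) := {O | O ∈ countableBasis α ∧ IsMeagre (s ∩ O)} with hT
  have hTc : T.Countable := (countable_countableBasis α).mono (fun O hO => hO.1)
  have hM1 : IsMeagre (⋃₀ ((fun O => s ∩ O) '' T)) :=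
    myIsMeagre_sUnion (hTc.image _) (by rintro t ⟨u, hu, rfl⟩; exact hu.2)
  have hMopen : IsOpen (⋃₀ T) := isOpen_sUnion (fun O hO => isOpen_of_mem_countableBasis hO.1)
  have hMdense : Dense (⋃₀ T) := by
    rw [dense_iff_inter_open]
    intro U hU hUne
    obtain ⟨O, hOopen, hOsub, hOne, hOmeagre⟩ := hc U hU hUne
    obtain ⟨y, hy⟩ := hOne
    obtain ⟨O', hO'basis, hyO', hO'sub⟩ :=
      (isBasis_countableBasis α).exists_subset_of_mem_open hy hOopen
    exact ⟨y, hOsub (hO'sub hyO'), O', ⟨hO'basis, hOmeagre.mono (inter_subset_inter_right _ hO'sub)⟩, hyO'⟩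
  refine h ?_
  have hcompl : IsMeagre (⋃₀ T)ᶜ := by
    rw [IsMeagre, compl_compl]
    exact residual_of_dense_open hMopen hMdense
  refine (myIsMeagre_union hM1 hcompl).mono ?_
  intro y hy
  by_cases hyM : y ∈ ⋃₀ T
  · obtain ⟨O, hO, hyO⟩ := hyM
    exact Or.inl ⟨s ∩ O, ⟨O, hO, rfl⟩, hy, hyO⟩
  · exact Or.inr hyM

/-- A non-meagre countable intersection of open sets is comeagre in some non-empty open set. -/
lemma gdelta_nonmeagre_comeagre [SecondCountableTopology α] {ι : Sort*} [Countable ι]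
    {O : ι → Set α} (ho : ∀ i, IsOpen (O i)) (h : ¬ IsMeagre (⋂ i, O i)) :
    ∃ U : Set α, IsOpen U ∧ U.Nonempty ∧ IsMeagre (U \ ⋂ i, O i) := by
  obtain ⟨U, hUopen, hUne, hU⟩ := exists_open_forall_nonmeagre h
  set W := ⋂ i, O i with hW
  have hdense : ∀ P : Set α, IsOpen P → P ⊆ U → P.Nonempty → (W ∩ P).Nonempty := by
    intro P hP hPU hPne
    exact nonmeagre_nonempty (hU P hP hPU hPne)
  refine ⟨U, hUopen, hUne, ?_⟩
  have hUW : U \ W = ⋃ i, U \ O i := by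
    ext y
    simp only [hW, mem_diff, mem_iInter, mem_iUnion]
    constructor
    · rintro ⟨hyU, hni⟩
      rw [not_forall] at hni
      obtain ⟨i, hi⟩ := hni
      exact ⟨i, hyU, hi⟩
    · rintro ⟨i, hyU, hi⟩
      exact ⟨hyU, fun hall => hi (hall i)⟩
  rw [hUW]
  refine myIsMeagre_iUnion (fun i => ?_)
  -- U \ O i is nowhere dense
  have hnwd : IsNowhereDense (U \ O i) := by
    rw [IsNowhereDense, eq_empty_iff_forall_notMem]
    intro y hy
    set P := interior (closure (U \ O i)) with hP
    have hPopen : IsOpen P := isOpen_interior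
    have hPsub : P ⊆ closure (U \ O i) := interior_subset
    have hPU : (P ∩ U).Nonempty := by
      have hyc : y ∈ closure U := closure_mono diff_subset (hPsub hy)
      rw [mem_closure_iff] at hyc
      exact hyc P hPopen hy
    obtain ⟨z, hzW, hzP, hzU⟩ := hdense (P ∩ U) (hPopen.inter hUopen) inter_subset_right hPU
    -- z ∈ O i, z ∈ P ⊆ closure (U \ O i); but P ∩ O i is open nbhd of z avoiding U \ O i?
    have hzOi : z ∈ O i := by rw [hW] at hzW; exact mem_iInter.1 hzW i
    have hzc : z ∈ closure (U \ O i) := hPsub hzP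
    rw [mem_closure_iff] at hzc
    obtain ⟨w, hw1, hw2⟩ := hzc (O i) (ho i) hzOi
    exact hw2.2 hw1
  obtain ⟨t, hts, htnwd, htc⟩ := hnwd.subset_of_closed_isNowhereDense
  rw [isMeagre_iff_countable_union_isNowhereDense]
  exact ⟨{t}, by simpa using htnwd, countable_singleton t, by simpa using hts⟩

end BaireHelpers
section Souslin
variable {α : Type*} [TopologicalSpace α]

/-- Points near which `B` is everywhere non-meagre. -/
def locNM (B : Set α) : Set α := {x | ∀ U : Set α, IsOpen U → x ∈ U → ¬ IsMeagre (B ∩ U)}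

lemma isClosed_locNM (B : Set α) : IsClosed (locNM B) := by
  rw [← isOpen_compl_iff, isOpen_iff_forall_mem_open]
  intro x hx
  simp only [locNM, mem_compl_iff, mem_setOf_eq, not_forall] at hx
  obtain ⟨U, hUopen, hxU, hmeagre⟩ := hx
  rw [not_not] at hmeagre
  refine ⟨U, ?_, hUopen, hxU⟩
  intro z hz hzmem
  exact hzmem U hUopen hz hmeagre

lemma meagre_of_nwd {s : Set α} (h : IsNowhereDense s) : IsMeagre s := by
  obtain ⟨t, hts, htnwd, htc⟩ := h.subset_of_closed_isNowhereDense
  rw [isMeagre_iff_countable_union_isNowhereDense]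
  exact ⟨{t}, by simpa using htnwd, countable_singleton t, by simpa using hts⟩

lemma diff_locNM_meagre [SecondCountableTopology α] (B : Set α) : IsMeagre (B \ locNM B) := by
  set T : Set (Set α) := {O | O ∈ countableBasis α ∧ IsMeagre (B ∩ O)} with hT
  have hTc : T.Countable := (countable_countableBasis α).mono (fun O hO => hO.1)
  have hM1 : IsMeagre (⋃₀ ((fun O => B ∩ O) '' T)) :=
    myIsMeagre_sUnion (hTc.image _) (by rintro t ⟨u, hu, rfl⟩; exact hu.2)
  refine hM1.mono ?_
  rintro y ⟨hyB, hy⟩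
  simp only [locNM, mem_setOf_eq, not_forall] at hy
  obtain ⟨U, hUopen, hxU, hmeagre⟩ := hy
  rw [not_not] at hmeagre
  obtain ⟨O', hO'basis, hyO', hO'sub⟩ :=
    (isBasis_countableBasis α).exists_subset_of_mem_open hxU hUopen
  exact ⟨B ∩ O', ⟨O', ⟨hO'basis, hmeagre.mono (inter_subset_inter_right _ hO'sub)⟩, rfl⟩, hyB, hyO'⟩

lemma locNM_subset_closure (B : Set α) : locNM B ⊆ closure B := by
  intro x hx
  rw [mem_closure_iff]
  intro U hU hxU
  obtain ⟨y, hy⟩ := nonmeagre_nonempty (hx U hU hxU)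
  exact ⟨y, hy.2, hy.1⟩

variable (P : List ℕ → Set α)

/-- The result of the Souslin operation applied to the scheme `P`, starting at node `t`. -/
def souslinA (t : List ℕ) : Set α :=
  {y | ∃ s : ℕ → List ℕ, s 0 = t ∧ (∀ k, ∃ i, s (k + 1) = s k ++ [i]) ∧ ∀ k, y ∈ P (s k)}

lemma souslinA_subset (t : List ℕ) : souslinA P t ⊆ P t := by
  rintro y ⟨s, h0, _, hk⟩
  have := hk 0
  rwa [h0] at this

lemma souslinA_succ (hmono : ∀ s i, P (s ++ [i]) ⊆ P s) (t : List ℕ) :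
    souslinA P t = ⋃ i, souslinA P (t ++ [i]) := by
  ext y
  constructor
  · rintro ⟨s, h0, hstep, hmem⟩
    obtain ⟨i, hi⟩ := hstep 0
    rw [h0] at hi
    exact mem_iUnion.2 ⟨i, fun k => s (k + 1), by simpa using hi, fun k => hstep (k + 1),
      fun k => hmem (k + 1)⟩
  · intro hy
    obtain ⟨i, s, h0, hstep, hmem⟩ := mem_iUnion.1 hy
    refine ⟨fun k => Nat.rec t (fun k _ => s k) k, rfl, ?_, ?_⟩
    · intro k
      cases k with
      | zero => exact ⟨i, by simp [h0]⟩
      | succ k => exact hstep k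
    · intro k
      cases k with
      | zero =>
        have : y ∈ P (t ++ [i]) := by rw [← h0]; exact hmem 0
        exact hmono t i this
      | succ k => exact hmem k

/-- Core of Nikodym's theorem: the result of the Souslin operation applied to a monotone
scheme of closed sets differs from a closed set by a meagre set. -/
theorem souslin_baire [SecondCountableTopology α] [BaireSpace α]
    (hPc : ∀ s, IsClosed (P s)) (hmono : ∀ s i, P (s ++ [i]) ⊆ P s) :
    ∃ C M : Set α, IsClosed C ∧ IsMeagre M ∧
      souslinA P [] \ C ⊆ M ∧ C \ souslinA P [] ⊆ M := by
  set A : List ℕ → Set α := souslinA P with hA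
  set F : List ℕ → Set α := fun t => locNM (A t) with hF
  have hFP : ∀ t, F t ⊆ P t := fun t =>
    (locNM_subset_closure _).trans
      ((closure_mono (souslinA_subset P t)).trans (by rw [(hPc t).closure_eq]))
  have claim1 : ∀ t, IsMeagre (F t \ ⋃ i, F (t ++ [i])) := by
    intro t
    by_contra hnm
    -- split off the boundary of F t
    have hbd : IsMeagre (F t \ interior (F t)) := by
      refine meagre_of_nwd ?_
      have hcl : IsClosed (F t \ interior (F t)) := (isClosed_locNM _).inter isOpen_interior.isClosed_compl
      rw [hcl.isNowhereDense_iff, eq_empty_iff_forall_notMem]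
      intro z hz
      have h1 : z ∈ interior (F t) :=
        interior_mono (diff_subset) hz
      exact (interior_subset hz).2 h1
    set R : Set α := interior (F t) ∩ ⋂ i, (F (t ++ [i]))ᶜ with hR
    have hRnm : ¬ IsMeagre R := by
      intro hRm
      refine hnm ((myIsMeagre_union hbd hRm).mono ?_)
      rintro y ⟨hy1, hy2⟩
      by_cases hint : y ∈ interior (F t)
      · exact Or.inr ⟨hint, by simpa [mem_iInter, mem_iUnion] using hy2⟩
      · exact Or.inl ⟨hy1, hint⟩
    -- R is a countable intersection of open sets
    have hRopen : R = ⋂ o : Option ℕ, (Option.rec (interior (F t)) (fun i => (F (t ++ [i]))ᶜ) o : Set α) := by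
      ext y
      constructor
      · rintro ⟨h1, h2⟩
        refine mem_iInter.2 fun o => ?_
        cases o with
        | none => exact h1
        | some i => exact mem_iInter.1 h2 i
      · intro h
        exact ⟨mem_iInter.1 h none, mem_iInter.2 fun i => mem_iInter.1 h (some i)⟩
    have hRcomeagre : ∃ U : Set α, IsOpen U ∧ U.Nonempty ∧ IsMeagre (U \ R) := by
      rw [hRopen] at hRnm ⊢
      refine gdelta_nonmeagre_comeagre (fun o => ?_) hRnm
      cases o with
      | none => exact isOpen_interior
      | some i => exact (isClosed_locNM _).isOpen_compl
    obtain ⟨U, hUopen, hUne, hUR⟩ := hRcomeagre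
    have hURne : (U ∩ R).Nonempty := by
      rcases (U ∩ R).eq_empty_or_nonempty with he | hne
      · exfalso
        refine open_not_meagre hUopen hUne (hUR.mono ?_)
        intro z hz
        refine ⟨hz, fun hzR => ?_⟩
        exact (eq_empty_iff_forall_notMem.1 he z) ⟨hz, hzR⟩
      · exact hne
    obtain ⟨w, hwU, hwR⟩ := hURne
    have hwF : w ∈ locNM (A t) := interior_subset hwR.1
    set U' : Set α := U ∩ interior (F t) with hU'
    have hU'open : IsOpen U' := hUopen.inter isOpen_interior
    have hwU' : w ∈ U' := ⟨hwU, hwR.1⟩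
    have hAnm : ¬ IsMeagre (A t ∩ U') := hwF U' hU'open hwU'
    -- but A t ∩ U' is meagre:
    have hAsub : A t ∩ U' ⊆ (⋃ i, A (t ++ [i]) \ F (t ++ [i])) ∪ (U \ R) := by
      rintro y ⟨hyA, hyU'⟩
      rw [hA, souslinA_succ P hmono t] at hyA
      obtain ⟨i, hyi⟩ := mem_iUnion.1 hyA
      by_cases hyF : y ∈ F (t ++ [i])
      · refine Or.inr ⟨hyU'.1, fun hyR => ?_⟩
        exact (mem_iInter.1 hyR.2 i) hyF
      · exact Or.inl (mem_iUnion.2 ⟨i, hyi, hyF⟩)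
    have : IsMeagre (A t ∩ U') :=
      (myIsMeagre_union (myIsMeagre_iUnion fun i => diff_locNM_meagre _) hUR).mono hAsub
    exact hAnm this
  -- assemble the meagre set
  set M : Set α := (⋃ t : List ℕ, (F t \ ⋃ i, F (t ++ [i]))) ∪ (⋃ t : List ℕ, (A t \ F t)) with hM
  have hMm : IsMeagre M :=
    myIsMeagre_union (myIsMeagre_iUnion claim1) (myIsMeagre_iUnion fun t => diff_locNM_meagre _)
  refine ⟨F [], M, isClosed_locNM _, hMm, ?_, ?_⟩
  · intro y hy
    exact Or.inr (mem_iUnion.2 ⟨[], hy⟩)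
  · rintro y ⟨hyF, hyA⟩
    by_contra hyM
    refine hyA ?_
    have step : ∀ t : List ℕ, y ∈ F t → ∃ i, y ∈ F (t ++ [i]) := by
      intro t hyt
      by_contra hno
      push_neg at hno
      refine hyM (Or.inl (mem_iUnion.2 ⟨t, hyt, ?_⟩))
      simp only [mem_iUnion, not_exists]
      exact hno
    let Z := {t : List ℕ // y ∈ F t}
    let stepZ : Z → Z := fun z =>
      ⟨z.1 ++ [Classical.choose (step z.1 z.2)], Classical.choose_spec (step z.1 z.2)⟩
    let E : ℕ → Z := fun k => Nat.rec ⟨[], hyF⟩ (fun _ z => stepZ z) k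
    refine ⟨fun k => (E k).1, rfl, fun k => ⟨Classical.choose (step (E k).1 (E k).2), rfl⟩, fun k => ?_⟩
    exact hFP _ (E k).2
end Souslin
section ProjBaire

/-- The projection along a Polish group/space of the intersection of a closed set with an
open cylinder has the Baire property (differs from a closed set by a meagre set). -/
theorem proj_baire {G X : Type*} [TopologicalSpace G] [PolishSpace G] [Nonempty G]
    [TopologicalSpace X] [PolishSpace X]
    (S : Set (G × X)) (hS : IsClosed S) (W : Set G) (hW : IsOpen W) :
    ∃ C M : Set X, IsClosed C ∧ IsMeagre M ∧
      {y | ∃ v ∈ W, (v, y) ∈ S} \ C ⊆ M ∧ C \ {y | ∃ v ∈ W, (v, y) ∈ S} ⊆ M := by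
  classical
  letI := upgradeIsCompletelyMetrizable G
  letI := upgradeIsCompletelyMetrizable X
  obtain ⟨e, he⟩ := TopologicalSpace.exists_dense_seq G
  set T : Set X := {y | ∃ v ∈ W, (v, y) ∈ S} with hT
  -- the scheme of closed subsets of G
  set C0 : ℕ → Set G := fun j =>
    if Metric.closedBall (e (Nat.unpair j).1) ((1/2 : ℝ)^(Nat.unpair j).2) ⊆ W then
      Metric.closedBall (e (Nat.unpair j).1) ((1/2 : ℝ)^(Nat.unpair j).2) else ∅ with hC0
  have hC0W : ∀ j, C0 j ⊆ W := by
    intro j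
    rw [hC0]
    dsimp only
    split
    · assumption
    · exact empty_subset _
  have hC0closed : ∀ j, IsClosed (C0 j) := by
    intro j
    rw [hC0]
    dsimp only
    split
    · exact Metric.isClosed_closedBall
    · exact isClosed_empty
  set piece : ℕ → ℕ → Set G := fun m j =>
    if m = 0 then C0 j else Metric.closedBall (e j) ((1/2 : ℝ)^m) with hpiece
  have hpiece0 : ∀ j, piece 0 j = C0 j := fun j => by simp [hpiece]
  have hpieceS : ∀ m j, m ≠ 0 → piece m j = Metric.closedBall (e j) ((1/2 : ℝ)^m) :=
    fun m j hm => by simp [hpiece, hm]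
  have hpiece_closed : ∀ m j, IsClosed (piece m j) := by
    intro m j
    rw [hpiece]
    dsimp only
    split
    · exact hC0closed j
    · exact Metric.isClosed_closedBall
  set K : List ℕ → Set G := fun s => ⋂ m ∈ Finset.range s.length, piece m (s.getD m 0) with hK
  have hKmono : ∀ (s : List ℕ) (i : ℕ), K (s ++ [i]) ⊆ K s := by
    intro s i v hv
    rw [hK, mem_iInter₂] at hv ⊢
    intro m hm
    rw [Finset.mem_range] at hm
    have h1 : m ∈ Finset.range (s ++ [i]).length := by
      rw [Finset.mem_range, List.length_append]
      omega
    have := hv m h1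
    rwa [List.getD_append _ _ _ _ hm] at this
  set P : List ℕ → Set X := fun s => closure {y | ∃ v ∈ K s, (v, y) ∈ S} with hP
  have hPc : ∀ s, IsClosed (P s) := fun s => isClosed_closure
  have hmono : ∀ (s : List ℕ) (i : ℕ), P (s ++ [i]) ⊆ P s := by
    intro s i
    rw [hP]
    refine closure_mono ?_
    rintro y ⟨v, hvK, hvS⟩
    exact ⟨v, hKmono s i hvK, hvS⟩
  -- identify the Souslin set with T
  have hST : souslinA P [] = T := by
    apply Set.Subset.antisymm
    · -- hard direction
      rintro y ⟨s, h0, hstep, hmem⟩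
      -- lengths and stability of entries
      have hlen : ∀ k, (s k).length = k := by
        intro k
        induction k with
        | zero => rw [h0]; rfl
        | succ k ih =>
          obtain ⟨i, hi⟩ := hstep k
          rw [hi, List.length_append, ih]; rfl
      have hstable : ∀ m k, m < k → (s k).getD m 0 = (s (m+1)).getD m 0 := by
        intro m k hmk
        induction k with
        | zero => omega
        | succ k ih =>
          rcases Nat.lt_or_ge m k with h | h
          · obtain ⟨i, hi⟩ := hstep k
            rw [hi, List.getD_append _ _ _ _ (by rw [hlen]; exact h)]
            exact ih h
          · have : m = k := by omega
            subst this; rfl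
      -- approximating sequences
      have hymem : ∀ k, ∃ yk vk, vk ∈ K (s (k+1)) ∧ (vk, yk) ∈ S ∧ dist yk y < (1/2:ℝ)^k := by
        intro k
        have hy : y ∈ P (s (k+1)) := hmem (k+1)
        rw [hP, Metric.mem_closure_iff] at hy
        obtain ⟨yk, ⟨vk, hvk, hvkS⟩, hd⟩ := hy ((1/2:ℝ)^k) (by positivity)
        exact ⟨yk, vk, hvk, hvkS, by rwa [dist_comm]⟩
      choose ys vs hvsK hvsS hds using hymem
      -- v's are in common balls
      have hball : ∀ m k, m ≤ k → vs k ∈ piece m ((s (m+1)).getD m 0) := by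
        intro m k hmk
        have h1 : vs k ∈ K (s (k+1)) := hvsK k
        rw [hK, mem_iInter₂] at h1
        have h2 : m ∈ Finset.range (s (k+1)).length := by
          rw [Finset.mem_range, hlen]; omega
        have := h1 m h2
        rwa [hstable m (k+1) (by omega)] at this
      have hcauchy : CauchySeq vs := by
        rw [Metric.cauchySeq_iff]
        intro ε hε
        obtain ⟨m, hm⟩ := exists_pow_lt_of_lt_one (by positivity : (0:ℝ) < ε/2) (by norm_num : (1/2:ℝ) < 1)
        refine ⟨m + 1, fun k hk l hl => ?_⟩
        have hb1 := hball (m+1) k (by omega)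
        have hb2 := hball (m+1) l (by omega)
        rw [hpieceS (m+1) _ (Nat.succ_ne_zero m), Metric.mem_closedBall] at hb1 hb2
        calc dist (vs k) (vs l) ≤ dist (vs k) (e ((s (m+1+1)).getD (m+1) 0)) +
              dist (vs l) (e ((s (m+1+1)).getD (m+1) 0)) := dist_triangle_right _ _ _
          _ ≤ (1/2:ℝ)^(m+1) + (1/2:ℝ)^(m+1) := add_le_add hb1 hb2
          _ < ε := by
              have h3 : (1/2:ℝ)^(m+1) ≤ (1/2:ℝ)^m :=
                pow_le_pow_of_le_one (by norm_num) (by norm_num) (by omega)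
              have : (1/2:ℝ)^(m+1) < ε/2 := lt_of_le_of_lt h3 hm
              linarith
      obtain ⟨v, hv⟩ := cauchySeq_tendsto_of_complete hcauchy
      have hys : Filter.Tendsto ys Filter.atTop (nhds y) := by
        rw [Metric.tendsto_atTop]
        intro ε hε
        obtain ⟨m, hm⟩ := exists_pow_lt_of_lt_one hε (by norm_num : (1/2:ℝ) < 1)
        refine ⟨m, fun k hk => ?_⟩
        have h3 : (1/2:ℝ)^k ≤ (1/2:ℝ)^m :=
          pow_le_pow_of_le_one (by norm_num) (by norm_num) hk
        exact lt_of_lt_of_le (hds k) (le_of_lt (lt_of_le_of_lt h3 hm))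
      have hvyS : (v, y) ∈ S :=
        hS.mem_of_tendsto (hv.prodMk_nhds hys) (Filter.Eventually.of_forall fun k => hvsS k)
      have hvW : v ∈ W := by
        have hvC0 : v ∈ C0 ((s 1).getD 0 0) := by
          have : ∀ k, vs k ∈ C0 ((s 1).getD 0 0) := by
            intro k
            have := hball 0 k (Nat.zero_le k)
            rwa [hpiece0] at this
          exact (hC0closed _).mem_of_tendsto hv (Filter.Eventually.of_forall this)
        exact hC0W _ hvC0
      exact ⟨v, hvW, hvyS⟩
    · -- easy direction
      rintro y ⟨v, hvW, hvS⟩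
      -- first ball
      obtain ⟨δ, hδpos, hδ⟩ := Metric.isOpen_iff.1 hW v hvW
      obtain ⟨k0, hk0⟩ := exists_pow_lt_of_lt_one (by positivity : (0:ℝ) < δ/2) (by norm_num : (1/2:ℝ) < 1)
      obtain ⟨i0, hi0⟩ := he.exists_dist_lt v (by positivity : (0:ℝ) < (1/2:ℝ)^k0)
      set j0 : ℕ := Nat.pair i0 k0 with hj0
      have hcond : Metric.closedBall (e i0) ((1/2:ℝ)^k0) ⊆ W := by
        intro u hu
        rw [Metric.mem_closedBall] at hu
        apply hδ
        rw [Metric.mem_ball]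
        calc dist u v ≤ dist u (e i0) + dist (e i0) v := dist_triangle _ _ _
          _ ≤ (1/2:ℝ)^k0 + (1/2:ℝ)^k0 := add_le_add hu (by rw [dist_comm]; exact le_of_lt hi0)
          _ < δ/2 + δ/2 := by linarith [hk0]
          _ = δ := by ring
      have hvC0 : v ∈ C0 j0 := by
        rw [hC0]
        dsimp only
        have hup : (Nat.unpair j0).1 = i0 ∧ (Nat.unpair j0).2 = k0 := by
          rw [hj0]; simp [Nat.unpair_pair]
        rw [hup.1, hup.2, if_pos hcond, Metric.mem_closedBall]
        exact le_of_lt hi0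
      -- witnesses for deeper levels
      have hjm : ∀ m : ℕ, ∃ j, v ∈ Metric.closedBall (e j) ((1/2:ℝ)^m) := by
        intro m
        obtain ⟨j, hj⟩ := he.exists_dist_lt v (by positivity : (0:ℝ) < (1/2:ℝ)^m)
        exact ⟨j, by rw [Metric.mem_closedBall]; exact le_of_lt hj⟩
      choose jm hjm' using hjm
      set jfun : ℕ → ℕ := fun m => if m = 0 then j0 else jm m with hjfun
      set sch : ℕ → List ℕ := fun k => (List.range k).map jfun with hsch
      have hvK : ∀ k, v ∈ K (sch k) := by
        intro k
        rw [hK, mem_iInter₂]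
        intro m hm
        rw [Finset.mem_range, hsch, List.length_map, List.length_range] at hm
        have hget : (sch k).getD m 0 = jfun m := by
          rw [hsch, List.getD_eq_getElem _ _ (by rw [List.length_map, List.length_range]; exact hm)]
          simp
        rw [hget]
        rcases Nat.eq_zero_or_pos m with rfl | hmpos
        · rw [hpiece0]
          have hj : jfun 0 = j0 := by simp [hjfun]
          rw [hj]; exact hvC0
        · have hne : m ≠ 0 := Nat.pos_iff_ne_zero.1 hmpos
          rw [hpieceS m _ hne]
          have hj : jfun m = jm m := by simp [hjfun, hne]
          rw [hj]; exact hjm' m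
      refine ⟨sch, by rw [hsch]; rfl, ?_, ?_⟩
      · intro k
        refine ⟨jfun k, ?_⟩
        show (List.range (k+1)).map jfun = (List.range k).map jfun ++ [jfun k]
        rw [List.range_succ, List.map_append]
        rfl
      · intro k
        rw [hP]
        exact subset_closure ⟨v, hvK k, hvS⟩
  obtain ⟨C, M, hCc, hMm, h1, h2⟩ := souslin_baire P hPc hmono
  rw [hST] at h1 h2
  exact ⟨C, M, hCc, hMm, h1, h2⟩

end ProjBaire
section SupMetTools

variable {X : Type*} {D : X → X → ℝ}

lemma myD_nonneg (hD_eq : ∀ x y : X, D x y = 0 ↔ x = y) (hD_symm : ∀ x y : X, D x y = D y x)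
    (hD_tri : ∀ x y z : X, D x z ≤ D x y + D y z) (u v : X) : 0 ≤ D u v := by
  have h0 : D u u = 0 := (hD_eq u u).2 rfl
  have h1 := hD_tri u v u
  rw [h0, hD_symm v u] at h1
  linarith

lemma le_supMet {m : ℕ} (x y : Fin m → X) (i : Fin m) : D (x i) (y i) ≤ supMet D x y := by
  unfold supMet
  exact le_ciSup (Set.finite_range fun j => D (x j) (y j)).bddAbove i

lemma supMet_le {m : ℕ} {x y : Fin m → X} {c : ℝ} (hc : 0 ≤ c)
    (h : ∀ i, D (x i) (y i) ≤ c) : supMet D x y ≤ c := by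
  rcases isEmpty_or_nonempty (Fin m) with hm | hm
  · unfold supMet
    rw [Real.iSup_of_isEmpty]; exact hc
  · exact ciSup_le h

lemma supMet_lt {m : ℕ} {x y : Fin m → X} {c : ℝ} (hc : 0 < c)
    (h : ∀ i, D (x i) (y i) < c) : supMet D x y < c := by
  rcases isEmpty_or_nonempty (Fin m) with hm | hm
  · unfold supMet
    rw [Real.iSup_of_isEmpty]; exact hc
  · obtain ⟨i₀, hi₀⟩ := Finite.exists_max (fun i => D (x i) (y i))
    exact lt_of_le_of_lt (ciSup_le hi₀) (h i₀)

lemma supMet_self {m : ℕ} (h0 : ∀ z : X, D z z = 0) (x : Fin m → X) : supMet D x x = 0 := by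
  rcases isEmpty_or_nonempty (Fin m) with hm | hm
  · unfold supMet
    exact Real.iSup_of_isEmpty _
  · refine le_antisymm (supMet_le le_rfl fun i => (h0 _).le) ?_
    have := le_supMet (D := D) x x hm.some
    rw [h0] at this
    exact this

lemma supMet_symm {m : ℕ} (hD_symm : ∀ x y : X, D x y = D y x) (x y : Fin m → X) :
    supMet D x y = supMet D y x := by
  unfold supMet
  exact iSup_congr fun i => hD_symm _ _

lemma supMet_tri (hD_eq : ∀ x y : X, D x y = 0 ↔ x = y) (hD_symm : ∀ x y : X, D x y = D y x)
    (hD_tri : ∀ x y z : X, D x z ≤ D x y + D y z) {m : ℕ} (x y z : Fin m → X) :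
    supMet D x z ≤ supMet D x y + supMet D y z := by
  have hnn := myD_nonneg hD_eq hD_symm hD_tri
  rcases isEmpty_or_nonempty (Fin m) with hm | hm
  · have e1 : supMet D x z = 0 := by unfold supMet; exact Real.iSup_of_isEmpty _
    have e2 : supMet D x y = 0 := by unfold supMet; exact Real.iSup_of_isEmpty _
    have e3 : supMet D y z = 0 := by unfold supMet; exact Real.iSup_of_isEmpty _
    rw [e1, e2, e3]; norm_num
  · refine supMet_le ?_ fun i => ?_
    · have := (hnn (x hm.some) (y hm.some)).trans (le_supMet x y hm.some)
      have h2 := (hnn (y hm.some) (z hm.some)).trans (le_supMet y z hm.some)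
      linarith
    · exact (hD_tri _ _ _).trans (add_le_add (le_supMet x y i) (le_supMet y z i))

end SupMetTools

section GenericsTools

variable {G X : Type*} [Group G] {D : X → X → ℝ} {a : G → X → X}

lemma supMet_act (ha_iso : ∀ g : G, ∀ x y : X, D (a g x) (a g y) = D x y) {m : ℕ}
    (g : G) (x y : Fin m → X) :
    supMet D (fun i => a g (x i)) (fun i => a g (y i)) = supMet D x y := by
  unfold supMet
  exact iSup_congr fun i => ha_iso g (x i) (y i)

lemma mem_orbit_self (ha_one : ∀ x : X, a 1 x = x) {m : ℕ} (x : Fin m → X) :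
    x ∈ orbitTup a x :=
  ⟨1, fun i => ha_one (x i)⟩

lemma orbit_act_mem (ha_mul : ∀ g h : G, ∀ x : X, a (g * h) x = a g (a h x)) {m : ℕ}
    {x y : Fin m → X} (g : G) (hy : y ∈ orbitTup a x) :
    (fun i => a g (y i)) ∈ orbitTup a x := by
  obtain ⟨h, hh⟩ := hy
  exact ⟨g * h, fun i => by rw [ha_mul, hh i]⟩

variable [TopologicalSpace X]

lemma mem_metCl_self {m : ℕ} (h0 : ∀ z : X, D z z = 0) {S : Set (Fin m → X)} {x : Fin m → X}
    (hx : x ∈ S) : x ∈ metCl D S := by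
  intro ε hε
  exact ⟨x, hx, by rw [supMet_self h0]; exact hε⟩

lemma metCl_mono {m : ℕ} {S T : Set (Fin m → X)} (h : S ⊆ T) : metCl D S ⊆ metCl D T := by
  intro x hx ε hε
  obtain ⟨y, hy, hd⟩ := hx ε hε
  exact ⟨y, h hy, hd⟩

lemma metCl_metCl (hD_eq : ∀ x y : X, D x y = 0 ↔ x = y) (hD_symm : ∀ x y : X, D x y = D y x)
    (hD_tri : ∀ x y z : X, D x z ≤ D x y + D y z) {m : ℕ} {S : Set (Fin m → X)} :
    metCl D (metCl D S) ⊆ metCl D S := by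
  intro x hx ε hε
  obtain ⟨y, hy, hd⟩ := hx (ε/2) (by linarith)
  obtain ⟨z, hz, hd2⟩ := hy (ε/2) (by linarith)
  refine ⟨z, hz, ?_⟩
  have := supMet_tri hD_eq hD_symm hD_tri x y z
  linarith

lemma metCl_orbit_invariant (ha_mul : ∀ g h : G, ∀ x : X, a (g * h) x = a g (a h x))
    (ha_iso : ∀ g : G, ∀ x y : X, D (a g x) (a g y) = D x y) {m : ℕ}
    {z w : Fin m → X} (g : G) (hw : w ∈ metCl D (orbitTup a z)) :
    (fun i => a g (w i)) ∈ metCl D (orbitTup a z) := by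
  intro ε hε
  obtain ⟨u, hu, hd⟩ := hw ε hε
  refine ⟨fun i => a g (u i), orbit_act_mem ha_mul g hu, ?_⟩
  rw [supMet_act ha_iso]
  exact hd

/-- Key: if `w` lies in the metric closure of the orbit of `z`, the two orbit closures agree. -/
lemma metCl_orbit_eq (hD_eq : ∀ x y : X, D x y = 0 ↔ x = y)
    (hD_symm : ∀ x y : X, D x y = D y x) (hD_tri : ∀ x y z : X, D x z ≤ D x y + D y z)
    (ha_one : ∀ x : X, a 1 x = x) (ha_mul : ∀ g h : G, ∀ x : X, a (g * h) x = a g (a h x))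
    (ha_iso : ∀ g : G, ∀ x y : X, D (a g x) (a g y) = D x y) {m : ℕ}
    {z w : Fin m → X} (hw : w ∈ metCl D (orbitTup a z)) :
    metCl D (orbitTup a w) = metCl D (orbitTup a z) := by
  apply Set.Subset.antisymm
  · -- orbit of w is within metCl of orbit of z
    refine (metCl_mono ?_).trans (metCl_metCl hD_eq hD_symm hD_tri)
    rintro y ⟨g, hg⟩
    have : y = fun i => a g (w i) := by
      funext i; rw [hg i]
    rw [this]
    exact metCl_orbit_invariant ha_mul ha_iso g hw
  · -- z lies in metCl of orbit of w
    have hz : z ∈ metCl D (orbitTup a w) := by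
      intro ε hε
      obtain ⟨u, ⟨g, hg⟩, hd⟩ := hw ε hε
      refine ⟨fun i => a g⁻¹ (w i), ⟨g⁻¹, fun i => rfl⟩, ?_⟩
      have h2 : (fun i => a g⁻¹ (u i)) = z := by
        funext i
        rw [← hg i, ← ha_mul, inv_mul_cancel, ha_one]
      have h1 : supMet D z (fun i => a g⁻¹ (w i)) = supMet D w u := by
        rw [← h2, supMet_act ha_iso, supMet_symm hD_symm]
      rw [h1]
      exact hd
    refine (metCl_mono ?_).trans (metCl_metCl hD_eq hD_symm hD_tri)
    rintro y ⟨g, hg⟩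
    have : y = fun i => a g (z i) := by funext i; rw [hg i]
    rw [this]
    exact metCl_orbit_invariant ha_mul ha_iso g hz

lemma orbitTup_act_eq (ha_one : ∀ x : X, a 1 x = x)
    (ha_mul : ∀ g h : G, ∀ x : X, a (g * h) x = a g (a h x)) {m : ℕ} (g : G) (w : Fin m → X) :
    orbitTup a (fun i => a g (w i)) = orbitTup a w := by
  ext y
  constructor
  · rintro ⟨h, hh⟩
    exact ⟨h * g, fun i => by rw [ha_mul, hh i]⟩
  · rintro ⟨h, hh⟩
    refine ⟨h * g⁻¹, fun i => ?_⟩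
    rw [ha_mul, ← ha_mul g⁻¹ g, inv_mul_cancel, ha_one, hh i]

lemma generics_act (ha_one : ∀ x : X, a 1 x = x)
    (ha_mul : ∀ g h : G, ∀ x : X, a (g * h) x = a g (a h x)) {m : ℕ} (g : G)
    {w : Fin m → X} (hw : w ∈ generics D a m) :
    (fun i => a g (w i)) ∈ generics D a m := by
  rw [generics, Set.mem_setOf_eq, orbitTup_act_eq ha_one ha_mul]
  exact hw

lemma encl_act (ha_mul : ∀ g h : G, ∀ x : X, a (g * h) x = a g (a h x))
    (ha_iso : ∀ g : G, ∀ x y : X, D (a g x) (a g y) = D x y) {m : ℕ} {ε : ℝ}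
    {z w : Fin m → X} (g : G) (hw : w ∈ encl D ε (orbitTup a z)) :
    (fun i => a g (w i)) ∈ encl D ε (orbitTup a z) := by
  obtain ⟨u, hu, hd⟩ := hw
  refine ⟨fun i => a g (u i), orbit_act_mem ha_mul g hu, ?_⟩
  rw [supMet_act ha_iso]
  exact hd

end GenericsTools
lemma polish_baireSpace (α : Type*) [TopologicalSpace α] [PolishSpace α] : BaireSpace α := by
  letI := upgradeIsCompletelyMetrizable α
  infer_instance

section GenericsResidual
variable {G X : Type*} [Group G] {D : X → X → ℝ} {a : G → X → X} [TopologicalSpace X]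

lemma generics_eq [PolishSpace X] [Nonempty X]
    (hD_eq : ∀ x y : X, D x y = 0 ↔ x = y) (hD_symm : ∀ x y : X, D x y = D y x)
    (hD_tri : ∀ x y z : X, D x z ≤ D x y + D y z)
    (ha_one : ∀ x : X, a 1 x = x) (ha_mul : ∀ g h : G, ∀ x : X, a (g * h) x = a g (a h x))
    (ha_iso : ∀ g : G, ∀ x y : X, D (a g x) (a g y) = D x y) {m : ℕ}
    {z : Fin m → X} (hz : z ∈ generics D a m) :
    generics D a m = metCl D (orbitTup a z) := by
  haveI : BaireSpace (Fin m → X) := polish_baireSpace _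
  ext w
  constructor
  · intro hw
    have hres : metCl D (orbitTup a w) ∩ metCl D (orbitTup a z) ∈ residual (Fin m → X) :=
      Filter.inter_mem hw hz
    obtain ⟨u, hu1, hu2⟩ := (dense_of_mem_residual hres).nonempty
    have e1 := metCl_orbit_eq hD_eq hD_symm hD_tri ha_one ha_mul ha_iso hu1
    have e2 := metCl_orbit_eq hD_eq hD_symm hD_tri ha_one ha_mul ha_iso hu2
    have hself : w ∈ metCl D (orbitTup a w) :=
      mem_metCl_self (fun z' => (hD_eq z' z').2 rfl) (mem_orbit_self ha_one w)
    rw [← e1, e2] at hself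
    exact hself
  · intro hw
    rw [generics, Set.mem_setOf_eq, metCl_orbit_eq hD_eq hD_symm hD_tri ha_one ha_mul ha_iso hw]
    exact hz

lemma generics_residual [PolishSpace X] [Nonempty X]
    (hD_eq : ∀ x y : X, D x y = 0 ↔ x = y) (hD_symm : ∀ x y : X, D x y = D y x)
    (hD_tri : ∀ x y z : X, D x z ≤ D x y + D y z)
    (ha_one : ∀ x : X, a 1 x = x) (ha_mul : ∀ g h : G, ∀ x : X, a (g * h) x = a g (a h x))
    (ha_iso : ∀ g : G, ∀ x y : X, D (a g x) (a g y) = D x y) {m : ℕ}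
    (hAG : ∀ ε > (0:ℝ), ∃ x : Fin m → X, encl D ε (orbitTup a x) ∈ residual (Fin m → X)) :
    generics D a m ∈ residual (Fin m → X) := by
  haveI : BaireSpace (Fin m → X) := polish_baireSpace _
  have hch : ∀ k : ℕ, ∃ x : Fin m → X,
      encl D (1/(k+1)) (orbitTup a x) ∈ residual (Fin m → X) :=
    fun k => hAG (1/(k+1)) (by positivity)
  choose xs hxs using hch
  have hWres : (⋂ k : ℕ, encl D (1/(k+1)) (orbitTup a (xs k))) ∈ residual (Fin m → X) :=
    countable_iInter_mem.mpr hxs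
  obtain ⟨y, hy⟩ := (dense_of_mem_residual hWres).nonempty
  have hsub : (⋂ k : ℕ, encl D (1/(k+1)) (orbitTup a (xs k))) ⊆ metCl D (orbitTup a y) := by
    intro w hw ε hε
    obtain ⟨k, hk⟩ := exists_nat_gt (2/ε)
    have hkpos : (0:ℝ) < (k:ℝ) + 1 := by positivity
    have hkε : 2/((k:ℝ)+1) < ε := by
      rw [div_lt_iff₀ hkpos]
      have h2 : (2:ℝ) < (k:ℝ) * ε := (div_lt_iff₀ hε).1 hk
      nlinarith [hε]
    obtain ⟨u, ⟨g, hg⟩, hd⟩ := Set.mem_iInter.1 hw k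
    obtain ⟨u', ⟨g', hg'⟩, hd'⟩ := Set.mem_iInter.1 hy k
    refine ⟨fun i => a (g * g'⁻¹) (y i), ⟨g * g'⁻¹, fun i => rfl⟩, ?_⟩
    have h1 : (fun i => a g (xs k i)) = u := funext hg
    have h1' : (fun i => a g' (xs k i)) = u' := funext hg'
    have hstep : supMet D u (fun i => a (g * g'⁻¹) (y i)) = supMet D u' y := by
      calc supMet D u (fun i => a (g * g'⁻¹) (y i))
          = supMet D (fun i => a g (xs k i)) (fun i => a g (a g'⁻¹ (y i))) := by
            rw [h1]
            congr 1
            funext i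
            exact ha_mul g g'⁻¹ (y i)
        _ = supMet D (xs k) (fun i => a g'⁻¹ (y i)) := supMet_act ha_iso g _ _
        _ = supMet D (fun i => a g' (xs k i)) (fun i => a g' (a g'⁻¹ (y i))) :=
            (supMet_act ha_iso g' _ _).symm
        _ = supMet D u' y := by
            rw [h1']
            congr 1
            funext i
            rw [← ha_mul, mul_inv_cancel, ha_one]
    have tri := supMet_tri hD_eq hD_symm hD_tri w u (fun i => a (g * g'⁻¹) (y i))
    rw [hstep] at tri
    have hd'' : supMet D u' y < 1/((k:ℝ)+1) := by
      rw [supMet_symm hD_symm]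
      exact hd'
    have hsum : (1:ℝ)/((k:ℝ)+1) + 1/((k:ℝ)+1) = 2/((k:ℝ)+1) := by ring
    have hd1 : supMet D w u < 1/((k:ℝ)+1) := hd
    linarith
  have hygen : metCl D (orbitTup a y) ∈ residual (Fin m → X) :=
    Filter.mem_of_superset hWres hsub
  refine Filter.mem_of_superset hygen ?_
  intro w hw
  rw [generics, Set.mem_setOf_eq, metCl_orbit_eq hD_eq hD_symm hD_tri ha_one ha_mul ha_iso hw]
  exact hygen

end GenericsResidual

section Slice

variable {X : Type*} [TopologicalSpace X] [SecondCountableTopology X]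

lemma continuous_snoc {n : ℕ} (x : Fin n → X) : Continuous fun y : X => (Fin.snoc x y : Fin (n+1) → X) := by
  refine continuous_pi fun j => ?_
  refine Fin.lastCases ?_ ?_ j
  · simp only [Fin.snoc_last]
    exact continuous_id
  · intro i
    simp only [Fin.snoc_castSucc]
    exact continuous_const

/-- Kuratowski–Ulam type lemma: a residual set of `(n+1)`-tuples has residual slices over a
comeagre set of `n`-tuples. -/
lemma slice_residual {n : ℕ} (Ω : Set (Fin (n+1) → X)) (hΩ : Ω ∈ residual (Fin (n+1) → X)) :
    ∃ N : Set (Fin n → X), IsMeagre N ∧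
      ∀ x : Fin n → X, x ∉ N → {y : X | Fin.snoc x y ∈ Ω} ∈ residual X := by
  obtain ⟨Sf, hSopen, hSdense, hScount, hSsub⟩ := mem_residual_iff.1 hΩ
  classical
  set Bad : Set (Fin (n+1) → X) → Set X → Set (Fin n → X) :=
    fun t O => {x' | ∀ y ∈ O, Fin.snoc x' y ∉ t} with hBad
  have keyopen : ∀ t ∈ Sf, ∀ O : Set X, IsOpen O → IsOpen (Bad t O)ᶜ := by
    intro t ht O hO
    rw [isOpen_iff_forall_mem_open]
    intro x' hx'
    simp only [hBad, Set.mem_compl_iff, Set.mem_setOf_eq, not_forall, not_not] at hx'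
    obtain ⟨y, hyO, hyt⟩ := hx'
    have hcont : Continuous fun p : (Fin n → X) × X => (Fin.snoc p.1 p.2 : Fin (n+1) → X) := by
      refine continuous_pi fun j => ?_
      refine Fin.lastCases ?_ ?_ j
      · simp only [Fin.snoc_last]
        exact continuous_snd
      · intro i
        simp only [Fin.snoc_castSucc]
        exact (continuous_apply i).comp continuous_fst
    have hopen2 : IsOpen ((fun p : (Fin n → X) × X => (Fin.snoc p.1 p.2 : Fin (n+1) → X)) ⁻¹' t
        ∩ (Set.univ ×ˢ O)) := ((hSopen t ht).preimage hcont).inter (isOpen_univ.prod hO)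
    have hmem2 : (x', y) ∈ (fun p : (Fin n → X) × X => (Fin.snoc p.1 p.2 : Fin (n+1) → X)) ⁻¹' t
        ∩ (Set.univ ×ˢ O) := ⟨hyt, Set.mem_univ _, hyO⟩
    obtain ⟨U, Vv, hU, hV, hxU, hyV, hUV⟩ := isOpen_prod_iff.1 hopen2 x' y hmem2
    refine ⟨U, ?_, hU, hxU⟩
    intro x'' hx''
    have := hUV (Set.mk_mem_prod hx'' hyV)
    simp only [hBad, Set.mem_compl_iff, Set.mem_setOf_eq, not_forall, not_not]
    exact ⟨y, this.2.2, this.1⟩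
  have keydense : ∀ t ∈ Sf, ∀ O : Set X, IsOpen O → O.Nonempty → Dense (Bad t O)ᶜ := by
    intro t ht O hO hOne
    rw [dense_iff_inter_open]
    intro W hW hWne
    set Q : Set (Fin (n+1) → X) :=
      {w | Fin.init w ∈ W ∧ w (Fin.last n) ∈ O} with hQ
    have hQopen : IsOpen Q := by
      have h1 : Continuous fun w : Fin (n+1) → X => Fin.init w :=
        continuous_pi fun i => continuous_apply _
      exact (hW.preimage h1).inter (hO.preimage (continuous_apply _))
    have hQne : Q.Nonempty := by
      obtain ⟨x', hx'⟩ := hWne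
      obtain ⟨y, hy⟩ := hOne
      refine ⟨Fin.snoc x' y, ?_, ?_⟩
      · rw [Fin.init_snoc]; exact hx'
      · rw [Fin.snoc_last]; exact hy
    obtain ⟨w, hwQ, hwt⟩ := (hSdense t ht).inter_open_nonempty Q hQopen hQne
    refine ⟨Fin.init w, ⟨hwQ.1, ?_⟩⟩
    simp only [hBad, Set.mem_compl_iff, Set.mem_setOf_eq, not_forall, not_not]
    refine ⟨w (Fin.last n), hwQ.2, ?_⟩
    rw [Fin.snoc_init_self]
    exact hwt
  have keymeagre : ∀ t ∈ Sf, ∀ O ∈ countableBasis X, IsMeagre (Bad t O) := by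
    intro t ht O hO
    exact residual_of_dense_open (keyopen t ht O (isOpen_of_mem_countableBasis hO))
      (keydense t ht O (isOpen_of_mem_countableBasis hO) (nonempty_of_mem_countableBasis hO))
  set N : Set (Fin n → X) :=
    ⋃₀ ((fun p : Set (Fin (n+1) → X) × Set X => Bad p.1 p.2) '' (Sf ×ˢ countableBasis X)) with hN
  have hNm : IsMeagre N :=
    myIsMeagre_sUnion ((hScount.prod (countable_countableBasis X)).image _)
      (by rintro s ⟨⟨t, O⟩, ⟨ht, hO⟩, rfl⟩; exact keymeagre t ht O hO)
  refine ⟨N, hNm, ?_⟩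
  intro x hx
  rw [mem_residual_iff]
  refine ⟨(fun t => {y : X | Fin.snoc x y ∈ t}) '' Sf, ?_, ?_, hScount.image _, ?_⟩
  · rintro s ⟨t, ht, rfl⟩
    exact (hSopen t ht).preimage (continuous_snoc x)
  · rintro s ⟨t, ht, rfl⟩
    rw [dense_iff_inter_open]
    intro U hU hUne
    obtain ⟨y₀, hy₀⟩ := hUne
    obtain ⟨O, hObasis, hyO, hOsub⟩ :=
      (isBasis_countableBasis X).exists_subset_of_mem_open hy₀ hU
    have hxnotbad : x ∉ Bad t O := by
      intro hbad
      exact hx ⟨Bad t O, ⟨(t, O), ⟨ht, hObasis⟩, rfl⟩, hbad⟩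
    simp only [hBad, Set.mem_setOf_eq, not_forall, not_not] at hxnotbad
    obtain ⟨y, hyO', hyt⟩ := hxnotbad
    exact ⟨y, hOsub hyO', hyt⟩
  · intro y hy
    apply hSsub
    intro t ht
    exact hy _ ⟨t, ht, rfl⟩

end Slice

section ActResidual
variable {G X : Type*} [Group G] [TopologicalSpace G] [TopologicalSpace X] {a : G → X → X}

lemma act_residual (ha_one : ∀ x : X, a 1 x = x)
    (ha_mul : ∀ g h : G, ∀ x : X, a (g * h) x = a g (a h x))
    (ha_cont : Continuous fun p : G × X => a p.1 p.2) (g : G) {s : Set X}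
    (hs : s ∈ residual X) : {y : X | a g y ∈ s} ∈ residual X := by
  have hc : ∀ g' : G, Continuous (a g') := fun g' =>
    ha_cont.comp (continuous_const.prodMk continuous_id)
  have ho : IsOpenMap (a g) := by
    intro U hU
    have himg : a g '' U = (a g⁻¹) ⁻¹' U := by
      ext y
      constructor
      · rintro ⟨u, hu, rfl⟩
        have : a g⁻¹ (a g u) = u := by rw [← ha_mul, inv_mul_cancel, ha_one]
        rwa [Set.mem_preimage, this]
      · intro hy
        refine ⟨a g⁻¹ y, hy, ?_⟩
        rw [← ha_mul, mul_inv_cancel, ha_one]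
    rw [himg]
    exact hU.preimage (hc g⁻¹)
  exact tendsto_residual_of_isOpenMap (hc g) ho hs

end ActResidual
/-- Extension lemma for topometric actions with ample generics: given `A`
non-meagre, `B` non-meagre in every non-empty open set, a generic tuple `x`, a
neighbourhood `V` of the identity and `ε > 0`, there are `y₀ ∈ A`, `y₁ ∈ B`, `h ∈ V` with
`(x,y₀)`, `(x,y₁)` generic and `D(h·(x,y₀), (x,y₁)) < ε`. -/
theorem stmt_7
    {G X : Type*} [Group G] [TopologicalSpace G] [IsTopologicalGroup G] [PolishSpace G]
    [TopologicalSpace X] [PolishSpace X]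
    (D : X → X → ℝ)
    (hD_eq : ∀ x y : X, D x y = 0 ↔ x = y)
    (hD_symm : ∀ x y : X, D x y = D y x)
    (hD_tri : ∀ x y z : X, D x z ≤ D x y + D y z)
    (hD_ref : ∀ U : Set X, IsOpen U → ∀ x ∈ U, ∃ ε > (0 : ℝ), {y | D x y < ε} ⊆ U)
    (hD_lsc : ∀ r : ℝ, IsClosed {p : X × X | D p.1 p.2 ≤ r})
    (a : G → X → X)
    (ha_one : ∀ x : X, a 1 x = x)
    (ha_mul : ∀ g h : G, ∀ x : X, a (g * h) x = a g (a h x))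
    (ha_cont : Continuous fun p : G × X => a p.1 p.2)
    (ha_iso : ∀ g : G, ∀ x y : X, D (a g x) (a g y) = D x y)
    (hAG : ∀ n : ℕ, ∀ ε > (0 : ℝ), ∃ x : Fin n → X,
      encl D ε (orbitTup a x) ∈ residual (Fin n → X))
    (A B : Set X)
    (hA : ¬ IsMeagre A)
    (hB : ∀ U : Set X, IsOpen U → U.Nonempty → ¬ IsMeagre (B ∩ U))
    {n : ℕ} (x : Fin n → X) (hx : x ∈ generics D a n)
    (V : Set G) (hV : V ∈ nhds (1 : G)) (hVopen : IsOpen V)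
    (ε : ℝ) (hε : 0 < ε) :
    ∃ y₀ ∈ A, ∃ y₁ ∈ B, ∃ h ∈ V,
      Fin.snoc x y₀ ∈ generics D a (n + 1) ∧
      Fin.snoc x y₁ ∈ generics D a (n + 1) ∧
      supMet D (fun i => a h ((Fin.snoc x y₀ : Fin (n + 1) → X) i)) (Fin.snoc x y₁) < ε := by
  classical
  have hD0 : ∀ z : X, D z z = 0 := fun z => (hD_eq z z).2 rfl
  obtain ⟨x0, hx0⟩ := nonmeagre_nonempty hA
  haveI : Nonempty X := ⟨x0⟩
  haveI hBX : BaireSpace X := polish_baireSpace X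
  haveI : BaireSpace (Fin n → X) := polish_baireSpace _
  haveI : BaireSpace (Fin (n+1) → X) := polish_baireSpace _
  set ε₁ : ℝ := ε/7 with hε₁def
  have hε₁ : 0 < ε₁ := by rw [hε₁def]; linarith
  -- the set of generic (n+1)-tuples is residual
  have hΩres : generics D a (n+1) ∈ residual (Fin (n+1) → X) :=
    generics_residual hD_eq hD_symm hD_tri ha_one ha_mul ha_iso (hAG (n+1))
  -- an ε₁-ample tuple
  obtain ⟨zst, hzst⟩ := hAG (n+1) ε₁ hε₁
  have hΘres : (generics D a (n+1) ∩ encl D ε₁ (orbitTup a zst)) ∈ residual (Fin (n+1) → X) :=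
    Filter.inter_mem hΩres hzst
  obtain ⟨N, hNm, hslice⟩ := slice_residual _ hΘres
  -- generic n-tuples are residual
  have hGn : generics D a n ∈ residual (Fin n → X) := by
    refine Filter.mem_of_superset hx ?_
    intro w hw
    rw [generics, Set.mem_setOf_eq, metCl_orbit_eq hD_eq hD_symm hD_tri ha_one ha_mul ha_iso hw]
    exact hx
  have hNc : Nᶜ ∈ residual (Fin n → X) := hNm
  obtain ⟨x'', hx''c, hx''g⟩ := (dense_of_mem_residual (Filter.inter_mem hNc hGn)).nonempty
  set Fd : Set X :=
    {y' : X | Fin.snoc x'' y' ∈ generics D a (n + 1) ∩ encl D ε₁ (orbitTup a zst)} with hFd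
  have hF'' : Fd ∈ residual X := hslice x'' hx''c
  have hxmem : x ∈ metCl D (orbitTup a x'') := by
    rw [← generics_eq hD_eq hD_symm hD_tri ha_one ha_mul ha_iso hx''g]
    exact hx
  have hgk : ∀ k : ℕ, ∃ g : G, supMet D x (fun i => a g (x'' i)) < 1/(k+1) := by
    intro k
    obtain ⟨u, ⟨g, hg⟩, hd⟩ := hxmem (1/(k+1)) (by positivity)
    refine ⟨g, ?_⟩
    have hu : (fun i => a g (x'' i)) = u := funext hg
    rw [hu]
    exact hd
  choose gk hgk' using hgk
  set Φ : Set X := ⋂ k : ℕ, {y : X | a (gk k)⁻¹ y ∈ Fd} with hΦdef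
  have hΦres : Φ ∈ residual X :=
    countable_iInter_mem.mpr fun k => act_residual ha_one ha_mul ha_cont (gk k)⁻¹ hF''
  -- key properties of Φ
  have hΦgen : ∀ y ∈ Φ, Fin.snoc x y ∈ generics D a (n+1) ∧
      ∃ g : G, supMet D (fun j => a g (zst j)) (Fin.snoc x y) < 2*ε₁ := by
    intro y hy
    have hkfact : ∀ k : ℕ, ((Fin.snoc (fun i => a (gk k) (x'' i)) y : Fin (n+1) → X)
          ∈ generics D a (n+1) ∩ encl D ε₁ (orbitTup a zst)) ∧
        supMet D (Fin.snoc x y) (Fin.snoc (fun i => a (gk k) (x'' i)) y) < 1/(k+1) := by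
      intro k
      have hyk : a (gk k)⁻¹ y ∈ Fd := by
        have := Set.mem_iInter.1 hy k
        exact this
      rw [hFd, Set.mem_setOf_eq] at hyk
      have htrans : (fun j => a (gk k) ((Fin.snoc x'' (a (gk k)⁻¹ y) : Fin (n+1) → X) j))
          = (Fin.snoc (fun i => a (gk k) (x'' i)) y : Fin (n+1) → X) := by
        funext j
        refine Fin.lastCases ?_ ?_ j
        · rw [Fin.snoc_last, Fin.snoc_last, ← ha_mul, mul_inv_cancel, ha_one]
        · intro i
          rw [Fin.snoc_castSucc, Fin.snoc_castSucc]
      refine ⟨⟨?_, ?_⟩, ?_⟩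
      · have := generics_act ha_one ha_mul (gk k) hyk.1
        rwa [htrans] at this
      · have := encl_act ha_mul ha_iso (gk k) hyk.2
        rwa [htrans] at this
      · refine supMet_lt (by positivity) fun j => ?_
        refine Fin.lastCases ?_ ?_ j
        · rw [Fin.snoc_last, Fin.snoc_last, hD0]
          positivity
        · intro i
          rw [Fin.snoc_castSucc, Fin.snoc_castSucc]
          exact lt_of_le_of_lt (le_supMet x (fun i' => a (gk k) (x'' i')) i) (hgk' k)
    constructor
    · -- genericity of (x, y)
      obtain ⟨z₀, hz₀⟩ := (dense_of_mem_residual hΩres).nonempty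
      have hgeq := generics_eq hD_eq hD_symm hD_tri ha_one ha_mul ha_iso hz₀
      rw [hgeq]
      intro δ hδ
      obtain ⟨k, hk⟩ := exists_nat_one_div_lt (by linarith : (0:ℝ) < δ/2)
      have hwk := hkfact k
      have hwkgen : (Fin.snoc (fun i => a (gk k) (x'' i)) y : Fin (n+1) → X)
          ∈ metCl D (orbitTup a z₀) := by
        rw [← hgeq]
        exact hwk.1.1
      obtain ⟨u, hu, hdu⟩ := hwkgen (δ/2) (by linarith)
      refine ⟨u, hu, ?_⟩
      have tri := supMet_tri hD_eq hD_symm hD_tri (Fin.snoc x y)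
        (Fin.snoc (fun i => a (gk k) (x'' i)) y) u
      have h2 := hwk.2
      linarith
    · -- closeness to the orbit of zst
      obtain ⟨k, hk⟩ := exists_nat_one_div_lt hε₁
      have hwk := hkfact k
      obtain ⟨u, ⟨g, hgu⟩, hdu⟩ := hwk.1.2
      refine ⟨g, ?_⟩
      have hueq : (fun j => a g (zst j)) = u := funext hgu
      rw [hueq, supMet_symm hD_symm]
      have tri := supMet_tri hD_eq hD_symm hD_tri (Fin.snoc x y)
        (Fin.snoc (fun i => a (gk k) (x'' i)) y) u
      have h2 := hwk.2
      linarith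
  -- a symmetric small neighbourhood of 1
  obtain ⟨V₀, hV₀open, hV₀one, hV₀mul⟩ := exists_open_nhds_one_mul_subset hV
  set V₁ : Set G := V₀ ∩ V₀⁻¹ with hV₁def
  have hV₁open : IsOpen V₁ := hV₀open.inter hV₀open.inv
  have hV₁one : (1:G) ∈ V₁ := ⟨hV₀one, by rw [Set.mem_inv, inv_one]; exact hV₀one⟩
  have hV₁prop : ∀ v₀ v₁ : G, v₀ ∈ V₁ → v₁ ∈ V₁ → v₁ * v₀⁻¹ ∈ V := by
    intro v₀ v₁ h0 h1
    have h0' : v₀⁻¹ ∈ V₀ := Set.mem_inv.1 h0.2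
    exact hV₀mul (Set.mul_mem_mul h1.1 h0')
  haveI : Nonempty G := ⟨1⟩
  obtain ⟨hseq, hdense⟩ := TopologicalSpace.exists_dense_seq G
  -- the closed relation
  set S : Set (G × X) :=
    {p | supMet D (fun j => a p.1 (zst j)) (Fin.snoc x p.2) ≤ 2*ε₁} with hSdef
  have hSclosed : IsClosed S := by
    have heq : S = ⋂ j : Fin (n+1),
        {p : G × X | D (a p.1 (zst j)) ((Fin.snoc x p.2 : Fin (n+1) → X) j) ≤ 2*ε₁} := by
      ext p
      rw [hSdef]
      simp only [Set.mem_setOf_eq, Set.mem_iInter]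
      constructor
      · intro h j
        exact le_trans (le_supMet (fun j' => a p.1 (zst j')) (Fin.snoc x p.2) j) h
      · intro h
        exact supMet_le (by positivity) h
    rw [heq]
    refine isClosed_iInter fun j => ?_
    have hcont : Continuous fun p : G × X =>
        ((a p.1 (zst j)), (Fin.snoc x p.2 : Fin (n+1) → X) j) := by
      refine Continuous.prodMk ?_ ?_
      · exact ha_cont.comp (continuous_fst.prodMk continuous_const)
      · exact (continuous_apply j).comp ((continuous_snoc x).comp continuous_snd)
    exact (hD_lsc (2*ε₁)).preimage hcont
  set W : ℕ → Set G := fun i => {g | g * (hseq i)⁻¹ ∈ V₁} with hWdef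
  have hWopen : ∀ i, IsOpen (W i) := fun i =>
    hV₁open.preimage (continuous_id.mul continuous_const)
  set T : ℕ → Set X := fun i => {y | ∃ v ∈ W i, (v, y) ∈ S} with hTdef
  have hcover : Φ ⊆ ⋃ i, T i := by
    intro y hy
    obtain ⟨g, hg⟩ := (hΦgen y hy).2
    have hOg : IsOpen ((fun h : G => g * h⁻¹) ⁻¹' V₁) :=
      hV₁open.preimage (continuous_const.mul continuous_inv)
    have hOgne : ((fun h : G => g * h⁻¹) ⁻¹' V₁).Nonempty := by
      refine ⟨g, ?_⟩
      rw [Set.mem_preimage, mul_inv_cancel]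
      exact hV₁one
    obtain ⟨i, hi⟩ := hdense.exists_mem_open hOg hOgne
    refine Set.mem_iUnion.2 ⟨i, g, hi, ?_⟩
    rw [hSdef]
    exact le_of_lt hg
  obtain ⟨UA, hUAopen, hUAne, hUA⟩ := exists_open_forall_nonmeagre hA
  have hΦUA : ¬ IsMeagre (UA ∩ Φ) :=
    nonmeagre_inter_residual (open_not_meagre hUAopen hUAne) hΦres
  have hTi : ∃ i, ¬ IsMeagre (T i ∩ UA) := by
    by_contra hall
    push_neg at hall
    refine hΦUA ((myIsMeagre_iUnion hall).mono ?_)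
    rintro y ⟨hyUA, hyΦ⟩
    obtain ⟨i, hi⟩ := Set.mem_iUnion.1 (hcover hyΦ)
    exact Set.mem_iUnion.2 ⟨i, hi, hyUA⟩
  obtain ⟨i, hTinm⟩ := hTi
  obtain ⟨C, M, hCc, hMm, hTC, hCT⟩ := proj_baire S hSclosed (W i) (hWopen i)
  have hCUA : ¬ IsMeagre (C ∩ UA) := by
    intro hm
    refine hTinm ((myIsMeagre_union hMm hm).mono ?_)
    rintro y ⟨hyT, hyUA⟩
    by_cases hyC : y ∈ C
    · exact Or.inr ⟨hyC, hyUA⟩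
    · exact Or.inl (hTC ⟨hyT, hyC⟩)
  have hO'' : (interior (closure (C ∩ UA))).Nonempty := by
    by_contra hemp
    rw [Set.not_nonempty_iff_eq_empty] at hemp
    exact hCUA (meagre_of_nwd hemp)
  set O : Set X := interior (closure (C ∩ UA)) ∩ UA with hOdef
  have hOopen : IsOpen O := isOpen_interior.inter hUAopen
  have hOsubC : O ⊆ C := by
    intro y hy
    have h1 : y ∈ closure (C ∩ UA) := interior_subset hy.1
    have h2 : closure (C ∩ UA) ⊆ C :=
      hCc.closure_subset_iff.2 Set.inter_subset_left
    exact h2 h1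
  have hOne : O.Nonempty := by
    obtain ⟨w, hw⟩ := hO''
    have h1 : w ∈ closure UA := closure_mono Set.inter_subset_right (interior_subset hw)
    rw [mem_closure_iff] at h1
    obtain ⟨z, hz1, hz2⟩ := h1 _ isOpen_interior hw
    exact ⟨z, hz1, hz2⟩
  have hOT : IsMeagre (O \ T i) :=
    hMm.mono fun y hy => hCT ⟨hOsubC hy.1, hy.2⟩
  have hΦc : IsMeagre Φᶜ := by
    rw [IsMeagre, compl_compl]
    exact hΦres
  have hR : IsMeagre ((O \ T i) ∪ Φᶜ) := myIsMeagre_union hOT hΦc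
  have hAO : ¬ IsMeagre (A ∩ O) := hUA O hOopen Set.inter_subset_right hOne
  obtain ⟨y₀, hy₀AO, hy₀R⟩ := nonmeagre_diff_meagre hAO hR
  have hy₀T : y₀ ∈ T i := by
    by_contra hc
    exact hy₀R (Or.inl ⟨hy₀AO.2, hc⟩)
  have hy₀Φ : y₀ ∈ Φ := by
    by_contra hc
    exact hy₀R (Or.inr hc)
  have hBO : ¬ IsMeagre (B ∩ O) := hB O hOopen hOne
  obtain ⟨y₁, hy₁BO, hy₁R⟩ := nonmeagre_diff_meagre hBO hR
  have hy₁T : y₁ ∈ T i := by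
    by_contra hc
    exact hy₁R (Or.inl ⟨hy₁BO.2, hc⟩)
  have hy₁Φ : y₁ ∈ Φ := by
    by_contra hc
    exact hy₁R (Or.inr hc)
  obtain ⟨v₀, hv₀W, hv₀S⟩ := hy₀T
  obtain ⟨v₁, hv₁W, hv₁S⟩ := hy₁T
  refine ⟨y₀, hy₀AO.1, y₁, hy₁BO.1, v₁ * v₀⁻¹, ?_, (hΦgen y₀ hy₀Φ).1, (hΦgen y₁ hy₁Φ).1, ?_⟩
  · have hveq : v₁ * v₀⁻¹ = (v₁ * (hseq i)⁻¹) * (v₀ * (hseq i)⁻¹)⁻¹ := by group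
    rw [hveq]
    exact hV₁prop _ _ hv₀W hv₁W
  · have hv₀S' : supMet D (fun j => a v₀ (zst j)) (Fin.snoc x y₀) ≤ 2*ε₁ := hv₀S
    have hv₁S' : supMet D (fun j => a v₁ (zst j)) (Fin.snoc x y₁) ≤ 2*ε₁ := hv₁S
    have h1 := supMet_tri hD_eq hD_symm hD_tri
      (fun j => a (v₁ * v₀⁻¹) ((Fin.snoc x y₀ : Fin (n+1) → X) j))
      (fun j => a v₁ (zst j)) (Fin.snoc x y₁)
    have h2 : supMet D (fun j => a (v₁ * v₀⁻¹) ((Fin.snoc x y₀ : Fin (n+1) → X) j))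
        (fun j => a v₁ (zst j))
        = supMet D (fun j => a v₀ (zst j)) (Fin.snoc x y₀) := by
      have e1 : (fun j => a v₁ (zst j)) = fun j => a (v₁ * v₀⁻¹) (a v₀ (zst j)) := by
        funext j
        rw [← ha_mul]
        congr 1
        group
      rw [e1, supMet_act ha_iso (v₁ * v₀⁻¹), supMet_symm hD_symm]
    rw [h2] at h1
    have hfin : (2*ε₁) + (2*ε₁) < ε := by
      rw [hε₁def]
      linarith
    linarith
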